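/- Let p ≡ 1 (mod 6) be a prime and a ∈ F_p*. Then a is a quadratic residue modulo p if and only if the group E(F_p) of points on y² = x³ + a³ has an element of order 3 (equivalently, 3 divides the order of E(F_p)). -/

import Mathlib

open WeierstrassCurve.Affine WeierstrassCurve.Affine.Point

/-- Number of projective points (affine solutions plus the point at infinity)
on the Bachet curve `y² = x³ + a³` over `F_p`. -/
def bachetCount (p : ℕ) [Fact p.Prime] (a : ZMod p) : ℕ :=
  haveI : NeZero p := ⟨(Fact.out : p.Prime).ne_zero⟩
  (Finset.univ.filter (fun P : ZMod p × ZMod p => P.2 ^ 2 = P.1 ^ 3 + a ^ 3)).card + 1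

/-- The Bachet curve `y² = x³ + a³` as a Weierstrass curve over `F_p`. -/
def bachetCurve (p : ℕ) [Fact p.Prime] (a : ZMod p) : WeierstrassCurve.Affine (ZMod p) :=
  { a₁ := 0, a₂ := 0, a₃ := 0, a₄ := 0, a₆ := a ^ 3 }

lemma some_eq_some_aux {F : Type*} [Field F] {W : WeierstrassCurve.Affine F}
    {x₁ y₁ x₂ y₂ : F} (h₁ : W.Nonsingular x₁ y₁) (h₂ : W.Nonsingular x₂ y₂)
    (hx : x₁ = x₂) (hy : y₁ = y₂) : some _ _ h₁ = some _ _ h₂ := by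
  subst hx; subst hy; rfl

theorem stmt_15 (p : ℕ) [Fact p.Prime] (hp : p % 6 = 1) (a : ZMod p) (ha : a ≠ 0) :
    IsSquare a ↔ ∃ P : (bachetCurve p a).Point, addOrderOf P = 3 := by
  haveI : Fact (Nat.Prime 3) := ⟨by norm_num⟩
  have hp2 : 7 ≤ p := by
    have := (Fact.out : p.Prime).two_le
    omega
  have h2 : (2 : ZMod p) ≠ 0 := by
    intro h
    have : ((2 : ℕ) : ZMod p) = 0 := by push_cast; exact h
    rw [ZMod.natCast_eq_zero_iff] at this
    have := Nat.le_of_dvd (by norm_num) this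
    omega
  have h3 : (3 : ZMod p) ≠ 0 := by
    intro h
    have : ((3 : ℕ) : ZMod p) = 0 := by push_cast; exact h
    rw [ZMod.natCast_eq_zero_iff] at this
    have := Nat.le_of_dvd (by norm_num) this
    omega
  set W := bachetCurve p a with hW
  constructor
  · rintro ⟨s, hs⟩
    have hs0 : s ≠ 0 := by rintro rfl; exact ha (by simp [hs])
    set b : ZMod p := s ^ 3 with hb
    have hb2 : b ^ 2 = a ^ 3 := by rw [hb, hs]; ring
    have hb0 : b ≠ 0 := pow_ne_zero _ hs0
    have hns : W.Nonsingular 0 b := by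
      rw [nonsingular_iff, equation_iff]
      refine ⟨by simp [hW, bachetCurve, hb2], Or.inr ?_⟩
      simp only [hW, bachetCurve, mul_zero, sub_zero, _root_.neg_zero]
      intro hc
      exact hb0 (by
        have : (2 : ZMod p) * b = 0 := by linear_combination hc
        exact (mul_eq_zero.mp this).resolve_left h2)
    have hy : b ≠ W.negY 0 b := by
      simp only [negY, hW, bachetCurve, mul_zero, sub_zero, _root_.neg_zero]
      intro hc
      exact hb0 (by
        have : (2 : ZMod p) * b = 0 := by linear_combination hc
        exact (mul_eq_zero.mp this).resolve_left h2)
    refine ⟨some _ _ hns, ?_⟩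
    have h2y : b - W.negY 0 b ≠ 0 := sub_ne_zero.mpr hy
    have hslope : W.slope 0 0 b b = 0 := by
      rw [slope_of_Y_ne rfl hy]
      simp [hW, bachetCurve]
    have hdouble : some _ _ hns + some _ _ hns = -some _ _ hns := by
      rw [add_self_of_Y_ne hy, neg_some]
      refine some_eq_some_aux _ _ ?_ ?_
      · rw [hslope, addX]; simp [hW, bachetCurve]
      · rw [WeierstrassCurve.Affine.addY, negAddY, hslope, addX]; simp [negY, hW, bachetCurve]
    refine addOrderOf_eq_prime ?_ (some_ne_zero hns)
    rw [succ_nsmul, succ_nsmul, one_nsmul, hdouble, neg_add_cancel]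
  · rintro ⟨P, hP⟩
    have h3P : P + P + P = 0 := by
      have := addOrderOf_nsmul_eq_zero P
      rwa [hP, succ_nsmul, succ_nsmul, one_nsmul] at this
    cases P with
    | zero =>
        rw [show (zero : W.Point) = 0 from rfl, addOrderOf_zero] at hP
        norm_num at hP
    | @some x y h =>
        by_cases hy : y = W.negY x y
        · rw [add_self_of_Y_eq hy, zero_add] at h3P
          exact absurd h3P (some_ne_zero h)
        · have hE : y ^ 2 = x ^ 3 + a ^ 3 := by
            have := (equation_iff x y).mp h.1
            simpa [hW, bachetCurve] using this
          have hy0 : y ≠ 0 := by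
            rintro rfl
            exact hy (by simp [negY, hW, bachetCurve])
          have h2y : y - W.negY x y ≠ 0 := sub_ne_zero.mpr hy
          have h2y' : (2 : ZMod p) * y ≠ 0 := mul_ne_zero h2 hy0
          have hslope : W.slope x x y y = 3 * x ^ 2 / (2 * y) := by
            rw [slope_of_Y_ne rfl hy]
            simp only [negY, hW, bachetCurve, mul_zero, zero_mul, sub_zero, _root_.neg_zero, add_zero,
              zero_add]
            ring_nf
          rw [add_self_of_Y_ne hy] at h3P
          have hneg := eq_neg_of_add_eq_zero_left h3P
          rw [neg_some] at hneg
          have hxeq : W.addX x x (W.slope x x y y) = x := by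
            injection hneg
          have key : x * (x ^ 3 + 4 * a ^ 3) = 0 := by
            rw [addX, hslope] at hxeq
            simp only [hW, bachetCurve] at hxeq
            field_simp at hxeq
            have h3' : (3 : ZMod p) * (x * (x ^ 3 + 4 * a ^ 3)) = 0 := by
              linear_combination -hxeq - 12 * x * hE
            exact (mul_eq_zero.mp h3').resolve_left h3
          rcases mul_eq_zero.mp key with hx0 | hx4
          · subst hx0
            refine ⟨y * a⁻¹, ?_⟩
            field_simp
            linear_combination -hE
          · -- x^3 + 4a^3 = 0, so y^2 = -3 a^3; need -3 is a square
            obtain ⟨g, hg⟩ := exists_prime_orderOf_dvd_card (G := (ZMod p)ˣ) 3 (by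
              rw [ZMod.card_units]
              omega)
            set ζ : ZMod p := (g : ZMod p) with hζ
            have hζ3 : ζ ^ 3 = 1 := by
              have := pow_orderOf_eq_one g
              rw [hg] at this
              simpa using congrArg Units.val this
            have hζ1 : ζ ≠ 1 := by
              intro hc
              have hg1 : g = 1 := Units.val_eq_one.mp hc
              rw [hg1, orderOf_one] at hg
              norm_num at hg
            have hquad : ζ ^ 2 + ζ + 1 = 0 := by
              have hfac : (ζ - 1) * (ζ ^ 2 + ζ + 1) = 0 := by linear_combination hζ3
              exact (mul_eq_zero.mp hfac).resolve_left (sub_ne_zero.mpr hζ1)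
            set s : ZMod p := 2 * ζ + 1 with hsdef
            have hs3 : s ^ 2 = -3 := by rw [hsdef]; linear_combination 4 * hquad
            have hsne : s ≠ 0 := by
              intro hc
              rw [hc] at hs3
              exact h3 (by linear_combination hs3)
            refine ⟨y * (s * a)⁻¹, ?_⟩
            field_simp
            linear_combination -hE - hx4 + a ^ 3 * hs3
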